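/- Let n ≥ 1 and let x be a diagonalizable n×n complex matrix with exactly r distinct eigenvalues α₁, …, α_r, and set m_k = dim_ℂ ker(x − α_k·1). Then the centralizer 𝔤_x has dimension m₁² + … + m_r², and the commutator set C(x) = {y·z − z·y : y, z ∈ 𝔤_x} is a ℂ-linear subspace of 𝔤_x of dimension (m₁² + … + m_r²) − r. -/

import Mathlib

/-- The centralizer `𝔤ₓ = {y : x·y = y·x}` as a ℂ-linear subspace of `Mₙ(ℂ)`. -/
noncomputable def matCentralizer (n : ℕ) (x : Matrix (Fin n) (Fin n) ℂ) :
    Submodule ℂ (Matrix (Fin n) (Fin n) ℂ) where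
  carrier := {y | x * y = y * x}
  add_mem' := by
    intro a b ha hb
    simp only [Set.mem_setOf_eq] at *
    rw [mul_add, add_mul, ha, hb]
  zero_mem' := by simp
  smul_mem' := by
    intro d a ha
    simp only [Set.mem_setOf_eq] at *
    rw [mul_smul_comm, smul_mul_assoc, ha]

/-- The set of commutators of elements of the centralizer of `x`. -/
def commSet (n : ℕ) (x : Matrix (Fin n) (Fin n) ℂ) : Set (Matrix (Fin n) (Fin n) ℂ) :=
  {t | ∃ y z : Matrix (Fin n) (Fin n) ℂ, x * y = y * x ∧ x * z = z * x ∧ t = y * z - z * y}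

open Module Matrix LinearMap Submodule
lemma diag_sub_smul_one {n : ℕ} (d : Fin n → ℂ) (β : ℂ) :
    Matrix.diagonal d - β • (1 : Matrix (Fin n) (Fin n) ℂ) =
      Matrix.diagonal (fun i => d i - β) := by
  ext i j
  by_cases h : i = j <;>
    simp [h, Matrix.diagonal_apply, Matrix.one_apply, Matrix.sub_apply, Matrix.smul_apply]

noncomputable def kerDiagEquiv {n : ℕ} (e : Fin n → ℂ) :
    LinearMap.ker (Matrix.mulVecLin (Matrix.diagonal e)) ≃ₗ[ℂ] ({i // e i = 0} → ℂ) where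
  toFun v j := v.1 j.1
  map_add' v w := rfl
  map_smul' c v := rfl
  invFun c := ⟨fun i => if h : e i = 0 then c ⟨i, h⟩ else 0, by
    simp only [LinearMap.mem_ker, Matrix.mulVecLin_apply]
    funext i
    simp only [Matrix.mulVec_diagonal, Pi.zero_apply]
    by_cases h : e i = 0 <;> simp [h]⟩
  left_inv := by
    rintro ⟨v, hv⟩
    ext i
    simp only
    by_cases h : e i = 0
    · simp [h]
    · simp only [h, dif_neg, not_false_iff]
      simp only [LinearMap.mem_ker, Matrix.mulVecLin_apply] at hv
      have := congrFun hv i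
      simp only [Matrix.mulVec_diagonal, Pi.zero_apply] at this
      exact (mul_eq_zero.mp this).resolve_left h |>.symm
  right_inv c := funext fun j => dif_pos j.2

lemma finrank_ker_diag {n : ℕ} (e : Fin n → ℂ) :
    finrank ℂ (LinearMap.ker (Matrix.mulVecLin (Matrix.diagonal e))) =
      Fintype.card {i // e i = 0} := by
  rw [(kerDiagEquiv e).finrank_eq, Module.finrank_fintype_fun_eq_card]

lemma ker_diag_ne_bot_iff {n : ℕ} (e : Fin n → ℂ) :
    LinearMap.ker (Matrix.mulVecLin (Matrix.diagonal e)) ≠ ⊥ ↔ ∃ i, e i = 0 := by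
  rw [ne_eq, ← Submodule.finrank_eq_zero (R := ℂ), finrank_ker_diag]
  simp [Fintype.card_eq_zero_iff, ← Fintype.card_pos_iff, Nat.pos_iff_ne_zero, isEmpty_subtype]

lemma commutator_of_zero_diag {ι : Type} [Fintype ι] [DecidableEq ι]
    (w : Matrix ι ι ℂ) (hw : ∀ i, w i i = 0) :
    ∃ y z : Matrix ι ι ℂ, w = y * z - z * y := by
  classical
  set c : ι → ℂ := fun i => ((Fintype.equivFin ι i : ℕ) : ℂ) with hc
  have hcinj : Function.Injective c := by
    intro i j h
    exact (Fintype.equivFin ι).injective (Fin.ext (Nat.cast_injective h))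
  refine ⟨Matrix.diagonal c, Matrix.of fun i j => if i = j then 0 else w i j / (c i - c j), ?_⟩
  ext i j
  simp only [Matrix.sub_apply, Matrix.diagonal_mul, Matrix.mul_diagonal, Matrix.of_apply]
  by_cases h : i = j
  · subst h; simp [hw i]
  · have hne : c i - c j ≠ 0 := sub_ne_zero.mpr (fun hh => h (hcinj hh))
    simp only [h, if_neg, not_false_iff]
    field_simp

lemma scalar_of_all {V : Type} [AddCommGroup V] [Module ℂ V]
    (f : V →ₗ[ℂ] V) (h : ∀ v : V, ∃ c : ℂ, f v = c • v) :
    ∃ c : ℂ, f = c • LinearMap.id := by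
  classical
  by_cases hV : ∀ v : V, v = 0
  · exact ⟨0, by ext v; rw [hV v]; simp⟩
  push_neg at hV
  obtain ⟨v₀, hv₀⟩ := hV
  obtain ⟨c₀, hc₀⟩ := h v₀
  refine ⟨c₀, ?_⟩
  ext v
  simp only [LinearMap.smul_apply, LinearMap.id_coe, id_eq]
  obtain ⟨c, hcv⟩ := h v
  by_cases hv : v = 0
  · simp [hv]
  by_cases hli : LinearIndependent ℂ ![v₀, v]
  · obtain ⟨c', hc'⟩ := h (v₀ + v)
    rw [map_add, hc₀, hcv, smul_add] at hc'
    have h0 : (c₀ - c') • v₀ + (c - c') • v = 0 := by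
      have h1 := sub_eq_zero.mpr hc'
      rw [sub_smul, sub_smul]
      abel_nf at h1 ⊢
      exact h1
    obtain ⟨h1, h2⟩ := LinearIndependent.pair_iff.mp hli _ _ h0
    rw [sub_eq_zero] at h1 h2
    rw [hcv, h2, ← h1]
  · rw [LinearIndependent.pair_iff] at hli
    push_neg at hli
    obtain ⟨s, t, hst, hne⟩ := hli
    have ht : t ≠ 0 := by
      intro h0
      subst h0
      simp only [zero_smul, add_zero, smul_eq_zero] at hst
      rcases hst with h1 | h1
      · exact hne h1 rfl
      · exact hv₀ h1
    have hveq : v = (-(t⁻¹ * s)) • v₀ := by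
      have h2 : t • v = -(s • v₀) := by rw [eq_neg_iff_add_eq_zero, add_comm]; exact hst
      have h3 := congrArg (fun x => t⁻¹ • x) h2
      simp only [smul_smul, inv_mul_cancel₀ ht, one_smul] at h3
      rw [h3, smul_neg, smul_smul, ← neg_smul]
    rw [hveq, LinearMap.map_smul, hc₀, smul_smul, smul_smul, mul_comm]

lemma zero_diag_basis :
    ∀ (m : ℕ) (V : Type) (_ : AddCommGroup V) (_ : @Module ℂ V _ _)
      (_ : FiniteDimensional ℂ V),
    finrank ℂ V ≤ m → ∀ f : V →ₗ[ℂ] V, LinearMap.trace ℂ V f = 0 →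
    ∃ (ι : Type) (_ : Fintype ι) (_ : DecidableEq ι) (b : Basis ι ℂ V),
      ∀ i, LinearMap.toMatrix b b f i i = 0 := by
  intro m
  induction m with
  | zero =>
    intro V _ _ _ hle f _
    have : Subsingleton V := Module.finrank_zero_iff.mp (Nat.le_zero.mp hle)
    exact ⟨Empty, inferInstance, inferInstance, Basis.empty V, fun i => i.elim⟩
  | succ m IH =>
    intro V _ _ _ hle f htr
    by_cases hle' : finrank ℂ V ≤ m
    · exact IH V _ _ inferInstance hle' f htr
    have hrk : finrank ℂ V = m + 1 := le_antisymm hle (not_le.mp hle')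
    by_cases hsc : ∀ v : V, ∃ c : ℂ, f v = c • v
    · -- scalar case: f = 0
      obtain ⟨c, hc⟩ := scalar_of_all f hsc
      have hc0 : c = 0 := by
        rw [hc, LinearMap.map_smul, LinearMap.trace_id, hrk] at htr
        have hne : ((m + 1 : ℕ) : ℂ) ≠ 0 := Nat.cast_ne_zero.mpr (Nat.succ_ne_zero m)
        rw [smul_eq_mul, mul_eq_zero] at htr
        exact htr.resolve_right hne
      have hf0 : f = 0 := by rw [hc, hc0, zero_smul]
      refine ⟨Fin (m+1), inferInstance, inferInstance, Module.finBasis ℂ V |>.reindex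
        (finCongr hrk), fun i => ?_⟩
      rw [hf0, map_zero]
      rfl
    · push_neg at hsc
      obtain ⟨v, hv⟩ := hsc
      have hv0 : v ≠ 0 := by
        intro h
        exact hv 0 (by rw [h, map_zero, smul_zero])
      set U : Submodule ℂ V := span ℂ {v} with hU
      have hfvU : f v ∉ U := by
        intro h
        obtain ⟨a, ha⟩ := Submodule.mem_span_singleton.mp h
        exact hv a ha.symm
      obtain ⟨W₀, hW₀⟩ := Submodule.exists_isCompl (U ⊔ span ℂ {f v})
      set W : Submodule ℂ V := span ℂ {f v} ⊔ W₀ with hW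
      have hfvW : f v ∈ W := Submodule.mem_sup_left (Submodule.mem_span_singleton_self _)
      have hcompl : IsCompl U W := by
        constructor
        · rw [disjoint_def]
          intro x hxU hxW
          rw [hW] at hxW
          obtain ⟨y, hy, w₀, hw₀, hsum⟩ := Submodule.mem_sup.mp hxW
          obtain ⟨a, ha⟩ := Submodule.mem_span_singleton.mp hy
          have hw₀' : w₀ ∈ U ⊔ span ℂ {f v} := by
            have : w₀ = x - a • f v := by rw [← hsum, ← ha]; abel
            rw [this]
            exact Submodule.sub_mem _ (Submodule.mem_sup_left hxU)
              (Submodule.mem_sup_right (Submodule.smul_mem _ a (Submodule.mem_span_singleton_self _)))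
          have hw₀0 : w₀ = 0 := by
            have := hW₀.disjoint
            rw [disjoint_def] at this
            exact this w₀ hw₀' hw₀
          have hx : x = a • f v := by rw [← hsum, ← ha, hw₀0, add_zero]
          by_cases haz : a = 0
          · rw [hx, haz, zero_smul]
          · exfalso
            apply hfvU
            have : f v = a⁻¹ • x := by rw [hx, smul_smul, inv_mul_cancel₀ haz, one_smul]
            rw [this]
            exact Submodule.smul_mem _ _ hxU
        · rw [codisjoint_iff, hW, ← sup_assoc, codisjoint_iff.mp hW₀.codisjoint]
      have hrkU : finrank ℂ U = 1 := finrank_span_singleton hv0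
      have hrkW : finrank ℂ W ≤ m := by
        have := Submodule.finrank_add_eq_of_isCompl hcompl
        omega
      set pU := U.linearProjOfIsCompl W hcompl with hpU
      set pW := W.linearProjOfIsCompl U hcompl.symm with hpW
      set g : W →ₗ[ℂ] W := pW ∘ₗ f ∘ₗ W.subtype with hg
      have htrg : LinearMap.trace ℂ W g = 0 := by
        have hdecomp : f = U.subtype ∘ₗ (pU ∘ₗ f) + W.subtype ∘ₗ (pW ∘ₗ f) := by
          ext x
          simp only [LinearMap.add_apply, LinearMap.coe_comp, Function.comp_apply,
            Submodule.coe_subtype]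
          exact (Submodule.projection_add_projection_eq_self hcompl (f x)).symm
        have h1 : LinearMap.trace ℂ V (U.subtype ∘ₗ (pU ∘ₗ f)) = 0 := by
          rw [LinearMap.trace_comp_comm']
          have hz : ∀ u : (U : Submodule ℂ V), ((pU ∘ₗ f) ∘ₗ U.subtype) u = 0 := by
            intro u
            obtain ⟨a, ha⟩ := Submodule.mem_span_singleton.mp u.2
            show pU (f (u : V)) = 0
            rw [← ha, LinearMap.map_smul, LinearMap.map_smul]
            have h0 : pU (f v) = 0 :=
              Submodule.linearProjOfIsCompl_apply_right hcompl ⟨f v, hfvW⟩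
            rw [h0, smul_zero]
          rw [show (pU ∘ₗ f) ∘ₗ U.subtype = 0 from LinearMap.ext hz, map_zero]
        have h2 : LinearMap.trace ℂ V (W.subtype ∘ₗ (pW ∘ₗ f)) =
            LinearMap.trace ℂ W g := by
          rw [LinearMap.trace_comp_comm']
          rfl
        rw [hdecomp, map_add, h1, h2, zero_add] at htr
        exact htr
      obtain ⟨ι, i1, i2, bW, hbW⟩ := IH W _ _ inferInstance hrkW g htrg
      -- basis of U
      have hli : LinearIndependent ℂ (fun _ : Unit => v) := linearIndependent_unique_iff.mpr hv0
      have hrange : span ℂ (Set.range fun _ : Unit => v) = U := by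
        rw [Set.range_const]
      let bU : Basis Unit ℂ U := (Basis.span hli).map (LinearEquiv.ofEq _ _ hrange)
      have hbU : (bU () : V) = v := by
        rw [Basis.map_apply]
        rw [LinearEquiv.coe_ofEq_apply]
        exact congrArg Subtype.val (Module.Basis.span_apply hli ())
      let e := Submodule.prodEquivOfIsCompl U W hcompl
      let bV : Basis (Unit ⊕ ι) ℂ V := (bU.prod bW).map e
      refine ⟨Unit ⊕ ι, inferInstance, inferInstance, bV, fun i => ?_⟩
      have hrepr : ∀ x : V, bV.repr x = (bU.prod bW).repr (e.symm x) := by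
        intro x
        rw [Basis.map_repr]
        rfl
      have hesymm : ∀ x : V, e.symm x = (pU x, pW x) := by
        intro x
        have hx : ((pU x : V) + (pW x : V)) = x := Submodule.projection_add_projection_eq_self hcompl x
        apply e.injective
        rw [e.apply_symm_apply]
        show x = ((pU x : V) + (pW x : V))
        rw [hx]
      cases i with
      | inl u =>
        rw [LinearMap.toMatrix_apply, hrepr, hesymm]
        have hbVu : (bV (Sum.inl u) : V) = v := by
          simp only [bV, Basis.map_apply]
          show e (bU.prod bW (Sum.inl u)) = v
          have h1 : (bU.prod bW (Sum.inl u)).1 = bU u := Basis.prod_apply_inl_fst _ _ _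
          have h2 : (bU.prod bW (Sum.inl u)).2 = 0 := Basis.prod_apply_inl_snd _ _ _
          rw [Submodule.coe_prodEquivOfIsCompl', h1, h2]
          simp only [Submodule.coe_zero, add_zero]
          cases u; exact hbU
        rw [hbVu]
        have : pU (f v) = 0 :=
          Submodule.linearProjOfIsCompl_apply_right hcompl ⟨f v, hfvW⟩
        rw [Basis.prod_repr_inl]
        show (bU.repr (pU (f v))) u = 0
        rw [this]
        simp
      | inr i =>
        rw [LinearMap.toMatrix_apply, hrepr, hesymm]
        have hbVi : (bV (Sum.inr i) : V) = (bW i : V) := by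
          simp only [bV, Basis.map_apply]
          show e (bU.prod bW (Sum.inr i)) = (bW i : V)
          have h1 : (bU.prod bW (Sum.inr i)).1 = 0 := Basis.prod_apply_inr_fst _ _ _
          have h2 : (bU.prod bW (Sum.inr i)).2 = bW i := Basis.prod_apply_inr_snd _ _ _
          rw [Submodule.coe_prodEquivOfIsCompl', h1, h2]
          simp
        rw [hbVi, Basis.prod_repr_inr]
        show (bW.repr (pW (f (bW i : V)))) i = 0
        have hgw : pW (f (bW i : V)) = g (bW i) := rfl
        rw [hgw]
        have := hbW i
        rw [LinearMap.toMatrix_apply] at this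
        exact this

lemma shoda {ι : Type} [Fintype ι] [DecidableEq ι] (w : Matrix ι ι ℂ)
    (hw : w.trace = 0) : ∃ y z : Matrix ι ι ℂ, w = y * z - z * y := by
  classical
  set b0 := Pi.basisFun ℂ ι with hb0
  set e : ((ι → ℂ) →ₗ[ℂ] (ι → ℂ)) ≃ₐ[ℂ] Matrix ι ι ℂ := LinearMap.toMatrixAlgEquiv b0
  set f := e.symm w with hf
  have hef : e f = w := e.apply_symm_apply w
  have htrf : LinearMap.trace ℂ (ι → ℂ) f = 0 := by
    rw [LinearMap.trace_eq_matrix_trace ℂ b0 f]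
    have : LinearMap.toMatrix b0 b0 f = e f := rfl
    rw [this, hef, hw]
  obtain ⟨ι', i1, i2, b, hb⟩ := zero_diag_basis (finrank ℂ (ι → ℂ)) (ι → ℂ) _ _
    inferInstance le_rfl f htrf
  set e2 : ((ι → ℂ) →ₗ[ℂ] (ι → ℂ)) ≃ₐ[ℂ] Matrix ι' ι' ℂ := LinearMap.toMatrixAlgEquiv b
  obtain ⟨y0, z0, hyz⟩ := commutator_of_zero_diag (e2 f) (fun i => hb i)
  refine ⟨e (e2.symm y0), e (e2.symm z0), ?_⟩
  have : f = e2.symm (y0 * z0 - z0 * y0) := by rw [← hyz, e2.symm_apply_apply]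
  rw [← hef, this, map_sub, _root_.map_mul, _root_.map_mul, map_sub, _root_.map_mul, _root_.map_mul]

lemma mem_matCentralizer {n : ℕ} {x y : Matrix (Fin n) (Fin n) ℂ} :
    y ∈ matCentralizer n x ↔ x * y = y * x := Iff.rfl

lemma diag_comm_iff {n : ℕ} (d : Fin n → ℂ) (y : Matrix (Fin n) (Fin n) ℂ) :
    Matrix.diagonal d * y = y * Matrix.diagonal d ↔ ∀ i j, d i ≠ d j → y i j = 0 := by
  constructor
  · intro h i j hne
    have he := congrFun (congrFun h i) j
    rw [Matrix.diagonal_mul, Matrix.mul_diagonal] at he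
    have : (d i - d j) * y i j = 0 := by rw [sub_mul]; rw [he]; ring
    rcases mul_eq_zero.mp this with h1 | h1
    · exact absurd (sub_eq_zero.mp h1) hne
    · exact h1
  · intro h
    ext i j
    rw [Matrix.diagonal_mul, Matrix.mul_diagonal]
    by_cases hd : d i = d j
    · rw [hd, mul_comm]
    · rw [h i j hd, mul_zero, zero_mul]

noncomputable def centDiagEquiv {n : ℕ} (d : Fin n → ℂ) :
    (matCentralizer n (Matrix.diagonal d)) ≃ₗ[ℂ] ({p : Fin n × Fin n // d p.1 = d p.2} → ℂ) where
  toFun y p := y.1 p.1.1 p.1.2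
  map_add' _ _ := rfl
  map_smul' _ _ := rfl
  invFun c := ⟨Matrix.of fun i j => if h : d i = d j then c ⟨(i, j), h⟩ else 0, by
    rw [mem_matCentralizer, diag_comm_iff]
    intro i j hne
    exact dif_neg hne⟩
  left_inv := by
    rintro ⟨y, hy⟩
    rw [mem_matCentralizer, diag_comm_iff] at hy
    ext i j
    simp only [Matrix.of_apply]
    by_cases h : d i = d j
    · rw [dif_pos h]
    · rw [dif_neg h, (hy i j h).symm]
  right_inv c := by
    funext p
    exact dif_pos p.2

lemma finrank_cent_diag {n : ℕ} (d : Fin n → ℂ) :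
    finrank ℂ (matCentralizer n (Matrix.diagonal d)) =
      Fintype.card {p : Fin n × Fin n // d p.1 = d p.2} := by
  rw [(centDiagEquiv d).finrank_eq, Module.finrank_fintype_fun_eq_card]

section counting
variable {n r : ℕ} {d : Fin n → ℂ} {α : Fin r → ℂ}

def pairEquiv (f : Fin n → Fin r) :
    {p : Fin n × Fin n // f p.1 = f p.2} ≃ (Σ k : Fin r, ({i // f i = k} × {i // f i = k})) where
  toFun q := ⟨f q.1.1, ⟨⟨q.1.1, rfl⟩, ⟨q.1.2, q.2.symm⟩⟩⟩
  invFun s := ⟨(s.2.1.1, s.2.2.1), by rw [s.2.1.2, s.2.2.2]⟩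
  left_inv q := rfl
  right_inv := by
    rintro ⟨k, ⟨⟨i, hi⟩, ⟨j, hj⟩⟩⟩
    subst hi
    rfl

lemma card_pairs (f : Fin n → Fin r) :
    Fintype.card {p : Fin n × Fin n // f p.1 = f p.2} =
      ∑ k : Fin r, (Fintype.card {i // f i = k}) ^ 2 := by
  rw [Fintype.card_congr (pairEquiv f), Fintype.card_sigma]
  exact Finset.sum_congr rfl fun k _ => by rw [Fintype.card_prod, sq]

end counting

section aux
variable {n r : ℕ} (d : Fin n → ℂ) (α : Fin r → ℂ) (h2 : ∀ i, ∃ k, d i = α k)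

lemma finrank_eig_diag (β : ℂ) :
    finrank ℂ (LinearMap.ker (Matrix.mulVecLin (Matrix.diagonal d - β • 1))) =
      Fintype.card {i // d i = β} := by
  rw [diag_sub_smul_one, finrank_ker_diag]
  exact Fintype.card_congr (Equiv.subtypeEquivRight fun i => sub_eq_zero)


noncomputable def fI (i : Fin n) : Fin r := (h2 i).choose
lemma fI_spec (i : Fin n) : d i = α (fI d α h2 i) := (h2 i).choose_spec
lemma deq_iff (hα : Function.Injective α) (i j : Fin n) :
    d i = d j ↔ fI d α h2 i = fI d α h2 j := by
  constructor
  · intro h; apply hα; rw [← fI_spec d α h2 i, ← fI_spec d α h2 j, h]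
  · intro h; rw [fI_spec d α h2 i, fI_spec d α h2 j, h]
lemma dk_iff (hα : Function.Injective α) (i : Fin n) (k : Fin r) : d i = α k ↔ fI d α h2 i = k := by
  constructor
  · intro h; exact hα ((fI_spec d α h2 i).symm.trans h)
  · intro h; rw [fI_spec d α h2 i, h]

noncomputable def Fk (k : Fin r) : Finset (Fin n) :=
  Finset.univ.filter (fun i => fI d α h2 i = k)
lemma mem_Fk (i : Fin n) (k : Fin r) : i ∈ Fk d α h2 k ↔ fI d α h2 i = k := by simp [Fk]
noncomputable def Tmap : Matrix (Fin n) (Fin n) ℂ →ₗ[ℂ] (Fin r → ℂ) where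
  toFun y k := ∑ i ∈ Fk d α h2 k, y i i
  map_add' y z := by funext k; simp [Matrix.add_apply, Finset.sum_add_distrib]
  map_smul' c y := by funext k; simp [Matrix.smul_apply, Finset.mul_sum]
lemma Tmap_apply (y : Matrix (Fin n) (Fin n) ℂ) (k : Fin r) :
    Tmap d α h2 y k = ∑ i ∈ Fk d α h2 k, y i i := rfl

noncomputable def ExtM (k : Fin r)
    (M : Matrix {i // fI d α h2 i = k} {i // fI d α h2 i = k} ℂ) :
    Matrix (Fin n) (Fin n) ℂ :=
  Matrix.of fun i j =>
    if h : fI d α h2 i = k ∧ fI d α h2 j = k then M ⟨i, h.1⟩ ⟨j, h.2⟩ else 0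

lemma ExtM_cond (hα : Function.Injective α) (k : Fin r) (M) (i j : Fin n)
    (hne : d i ≠ d j) : ExtM d α h2 k M i j = 0 := by
  show dite _ _ _ = 0
  rw [dif_neg]
  intro hc
  exact hne ((deq_iff d α h2 hα i j).mpr (hc.1.trans hc.2.symm))

lemma ExtM_mul_same (k : Fin r) (M N) :
    ExtM d α h2 k M * ExtM d α h2 k N = ExtM d α h2 k (M * N) := by
  ext i j
  rw [Matrix.mul_apply]
  show _ = dite _ _ _
  by_cases hi : fI d α h2 i = k
  · by_cases hj : fI d α h2 j = k
    · rw [dif_pos ⟨hi, hj⟩, Matrix.mul_apply]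
      have hB : ∑ a : {l // fI d α h2 l = k}, M ⟨i, hi⟩ a * N a ⟨j, hj⟩ =
          ∑ l ∈ Fk d α h2 k, ExtM d α h2 k M i l * ExtM d α h2 k N l j := by
        rw [Finset.sum_subtype (Fk d α h2 k) (fun l => mem_Fk d α h2 l k)
          (fun l => ExtM d α h2 k M i l * ExtM d α h2 k N l j)]
        refine Finset.sum_congr rfl fun a _ => ?_
        show M ⟨i, hi⟩ a * N a ⟨j, hj⟩ =
          (dite _ _ _ : ℂ) * (dite _ _ _ : ℂ)
        rw [dif_pos ⟨hi, a.2⟩, dif_pos ⟨a.2, hj⟩]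
      rw [hB]
      refine (Finset.sum_subset (Finset.subset_univ _) fun l _ hl => ?_).symm
      rw [mem_Fk] at hl
      have hzz : ExtM d α h2 k N l j = 0 := by
        show dite _ _ _ = 0
        exact dif_neg (fun hc => hl hc.1)
      rw [hzz, mul_zero]
    · rw [dif_neg (fun hc => hj hc.2)]
      refine Finset.sum_eq_zero fun l _ => ?_
      have : ExtM d α h2 k N l j = 0 := by
        show dite _ _ _ = 0
        exact dif_neg (fun hc => hj hc.2)
      rw [this, mul_zero]
  · rw [dif_neg (fun hc => hi hc.1)]
    refine Finset.sum_eq_zero fun l _ => ?_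
    have : ExtM d α h2 k M i l = 0 := by
      show dite _ _ _ = 0
      exact dif_neg (fun hc => hi hc.1)
    rw [this, zero_mul]

lemma ExtM_mul_ne {k k' : Fin r} (hkk' : k ≠ k') (M N) :
    ExtM d α h2 k M * ExtM d α h2 k' N = 0 := by
  ext i j
  rw [Matrix.mul_apply]
  refine Finset.sum_eq_zero fun l _ => ?_
  by_cases hl : fI d α h2 l = k
  · have : ExtM d α h2 k' N l j = 0 := by
      show dite _ _ _ = 0
      exact dif_neg (fun hc => hkk' (hl.symm.trans hc.1))
    rw [this, mul_zero]
  · have : ExtM d α h2 k M i l = 0 := by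
      show dite _ _ _ = 0
      exact dif_neg (fun hc => hl hc.2)
    rw [this, zero_mul]

lemma ExtM_sub (k : Fin r) (M N) :
    ExtM d α h2 k (M - N) = ExtM d α h2 k M - ExtM d α h2 k N := by
  ext i j
  simp only [ExtM, Matrix.sub_apply, Matrix.of_apply]
  by_cases h : fI d α h2 i = k ∧ fI d α h2 j = k
  · rw [dif_pos h, dif_pos h, dif_pos h]
  · rw [dif_neg h, dif_neg h, dif_neg h, sub_zero]

lemma sum_ExtM_restrict (hα : Function.Injective α) (w : Matrix (Fin n) (Fin n) ℂ)
    (hw : ∀ i j, d i ≠ d j → w i j = 0) :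
    ∑ k, ExtM d α h2 k (Matrix.of fun a b : {i // fI d α h2 i = k} => w a.1 b.1) = w := by
  ext i j
  rw [Matrix.sum_apply]
  by_cases hij : fI d α h2 i = fI d α h2 j
  · rw [Finset.sum_eq_single (fI d α h2 i)]
    · show dite _ _ _ = w i j
      rw [dif_pos ⟨rfl, hij.symm⟩]
      rfl
    · intro k' _ hk'
      show dite _ _ _ = (0 : ℂ)
      exact dif_neg (fun hc => hk' hc.1.symm)
    · intro h; exact absurd (Finset.mem_univ _) h
  · rw [Finset.sum_eq_zero, hw i j (fun hd => hij ((deq_iff d α h2 hα i j).mp hd))]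
    intro k' _
    show dite _ _ _ = (0 : ℂ)
    exact dif_neg (fun hc => hij (hc.1.trans hc.2.symm))

lemma block_mul (hα : Function.Injective α) (a b : Matrix (Fin n) (Fin n) ℂ)
    (ha : ∀ i j, d i ≠ d j → a i j = 0) (k : Fin r) :
    ∑ i ∈ Fk d α h2 k, (a * b) i i =
      ∑ i ∈ Fk d α h2 k, ∑ j ∈ Fk d α h2 k, a i j * b j i := by
  refine Finset.sum_congr rfl fun i hi => ?_
  rw [Matrix.mul_apply]
  rw [mem_Fk] at hi
  symm
  apply Finset.sum_subset (Finset.subset_univ _)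
  intro l _ hl
  rw [mem_Fk] at hl
  have hd : d i ≠ d l := fun hd => hl (((deq_iff d α h2 hα i l).mp hd).symm.trans hi)
  rw [ha i l hd, zero_mul]

lemma blocktrace_comm (hα : Function.Injective α) (a b : Matrix (Fin n) (Fin n) ℂ)
    (ha : ∀ i j, d i ≠ d j → a i j = 0) (hb : ∀ i j, d i ≠ d j → b i j = 0) (k : Fin r) :
    ∑ i ∈ Fk d α h2 k, (a * b) i i = ∑ i ∈ Fk d α h2 k, (b * a) i i := by
  rw [block_mul d α h2 hα a b ha k, block_mul d α h2 hα b a hb k, Finset.sum_comm]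
  exact Finset.sum_congr rfl fun i _ => Finset.sum_congr rfl fun j _ => mul_comm _ _

lemma commSet_diag (hα : Function.Injective α) :
    commSet n (Matrix.diagonal d) =
      ↑(matCentralizer n (Matrix.diagonal d) ⊓ LinearMap.ker (Tmap d α h2)) := by
  apply Set.Subset.antisymm
  · rintro t ⟨y, z, hy, hz, rfl⟩
    rw [diag_comm_iff] at hy hz
    simp only [SetLike.mem_coe, Submodule.mem_inf, mem_matCentralizer, LinearMap.mem_ker]
    constructor
    · rw [diag_comm_iff]
      intro i j hne
      rw [Matrix.sub_apply, Matrix.mul_apply, Matrix.mul_apply]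
      rw [Finset.sum_eq_zero, Finset.sum_eq_zero, sub_zero]
      · intro l _
        by_cases hd : d i = d l
        · rw [hy l j (fun h => hne (hd.trans h)), mul_zero]
        · rw [hz i l hd, zero_mul]
      · intro l _
        by_cases hd : d i = d l
        · rw [hz l j (fun h => hne (hd.trans h)), mul_zero]
        · rw [hy i l hd, zero_mul]
    · rw [map_sub, sub_eq_zero]
      funext k
      rw [Tmap_apply, Tmap_apply]
      exact blocktrace_comm d α h2 hα y z hy hz k
  · intro w hw
    simp only [SetLike.mem_coe, Submodule.mem_inf, mem_matCentralizer,
      LinearMap.mem_ker] at hw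
    obtain ⟨hw1, hw2⟩ := hw
    rw [diag_comm_iff] at hw1
    have htr : ∀ k, Matrix.trace
        (Matrix.of fun a b : {i // fI d α h2 i = k} => w a.1 b.1) = 0 := by
      intro k
      rw [Matrix.trace]
      have : ∑ a : {i // fI d α h2 i = k}, Matrix.diag
          (Matrix.of fun a b : {i // fI d α h2 i = k} => w a.1 b.1) a =
          ∑ i ∈ Fk d α h2 k, w i i :=
        (Finset.sum_subtype (Fk d α h2 k) (fun l => mem_Fk d α h2 l k) (fun i => w i i)).symm
      rw [this, ← Tmap_apply d α h2 w k, hw2]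
      rfl
    choose Y Z hYZ using fun k => shoda _ (htr k)
    refine ⟨∑ k, ExtM d α h2 k (Y k), ∑ k, ExtM d α h2 k (Z k), ?_, ?_, ?_⟩
    · rw [diag_comm_iff]
      intro i j hne
      rw [Matrix.sum_apply]
      exact Finset.sum_eq_zero fun k _ => ExtM_cond d α h2 hα k (Y k) i j hne
    · rw [diag_comm_iff]
      intro i j hne
      rw [Matrix.sum_apply]
      exact Finset.sum_eq_zero fun k _ => ExtM_cond d α h2 hα k (Z k) i j hne
    · have hyz : (∑ k, ExtM d α h2 k (Y k)) * (∑ k, ExtM d α h2 k (Z k)) =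
          ∑ k, ExtM d α h2 k (Y k * Z k) := by
        rw [Finset.sum_mul_sum]
        refine Finset.sum_congr rfl fun k _ => ?_
        rw [Finset.sum_eq_single k]
        · exact ExtM_mul_same d α h2 k (Y k) (Z k)
        · intro k' _ hk'
          exact ExtM_mul_ne d α h2 (Ne.symm hk') (Y k) (Z k')
        · intro h; exact absurd (Finset.mem_univ _) h
      have hzy : (∑ k, ExtM d α h2 k (Z k)) * (∑ k, ExtM d α h2 k (Y k)) =
          ∑ k, ExtM d α h2 k (Z k * Y k) := by
        rw [Finset.sum_mul_sum]
        refine Finset.sum_congr rfl fun k _ => ?_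
        rw [Finset.sum_eq_single k]
        · exact ExtM_mul_same d α h2 k (Z k) (Y k)
        · intro k' _ hk'
          exact ExtM_mul_ne d α h2 (Ne.symm hk') (Z k) (Y k')
        · intro h; exact absurd (Finset.mem_univ _) h
      rw [hyz, hzy, ← Finset.sum_sub_distrib]
      have : ∀ k, ExtM d α h2 k (Y k * Z k) - ExtM d α h2 k (Z k * Y k) =
          ExtM d α h2 k (Matrix.of fun a b : {i // fI d α h2 i = k} => w a.1 b.1) := by
        intro k
        rw [← ExtM_sub, ← hYZ k]
      rw [Finset.sum_congr rfl (fun k _ => this k), sum_ExtM_restrict d α h2 hα w hw1]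

set_option synthInstance.maxHeartbeats 800000 in
lemma finrank_B0 (hα : Function.Injective α) (h1 : ∀ k, ∃ i, d i = α k) :
    finrank ℂ (matCentralizer n (Matrix.diagonal d) ⊓ LinearMap.ker (Tmap d α h2) :
        Submodule ℂ (Matrix (Fin n) (Fin n) ℂ)) + r =
      finrank ℂ (matCentralizer n (Matrix.diagonal d)) := by
  classical
  set Cd := matCentralizer n (Matrix.diagonal d) with hCd
  set T' : Cd →ₗ[ℂ] (Fin r → ℂ) := (Tmap d α h2).domRestrict Cd with hT'
  have hsing : ∀ k, Pi.single k (1 : ℂ) ∈ LinearMap.range T' := by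
    intro k
    obtain ⟨i0, hi0⟩ := h1 k
    have hfi0 : fI d α h2 i0 = k := hα ((fI_spec d α h2 i0).symm.trans hi0)
    set y : Matrix (Fin n) (Fin n) ℂ := Matrix.of fun a b => if a = i0 ∧ b = i0 then 1 else 0
      with hy
    have hymem : y ∈ Cd := by
      rw [hCd, mem_matCentralizer, diag_comm_iff]
      intro i j hne
      show (if i = i0 ∧ j = i0 then (1:ℂ) else 0) = 0
      rw [if_neg]
      rintro ⟨rfl, rfl⟩
      exact hne rfl
    refine ⟨⟨y, hymem⟩, ?_⟩
    funext k'
    show Tmap d α h2 y k' = (Pi.single k (1:ℂ) : Fin r → ℂ) k'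
    rw [Tmap_apply]
    have hdiag : ∀ i, y i i = if i = i0 then (1:ℂ) else 0 := by
      intro i
      show (if i = i0 ∧ i = i0 then (1:ℂ) else 0) = _
      by_cases h : i = i0 <;> simp [h]
    rw [Finset.sum_congr rfl (fun i _ => hdiag i), Finset.sum_ite_eq' (Fk d α h2 k') i0
      (fun _ => (1:ℂ))]
    simp only [mem_Fk, hfi0, Pi.single_apply]
    by_cases h : k = k' <;> simp [h, eq_comm]
  have hrange : LinearMap.range T' = ⊤ := by
    rw [eq_top_iff, ← (Pi.basisFun ℂ (Fin r)).span_eq, Submodule.span_le]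
    rintro _ ⟨k, rfl⟩
    rw [Pi.basisFun_apply]
    exact hsing k
  have hrn := LinearMap.finrank_range_add_finrank_ker T'
  rw [hrange, finrank_top, Module.finrank_fintype_fun_eq_card, Fintype.card_fin] at hrn
  have hkerT' : LinearMap.ker T' = Submodule.comap Cd.subtype (Cd ⊓ LinearMap.ker (Tmap d α h2)) := by
    ext x
    simp only [LinearMap.mem_ker, Submodule.mem_comap, Submodule.mem_inf,
      Submodule.coe_subtype, LinearMap.domRestrict_apply, hT']
    exact ⟨fun h => ⟨x.2, h⟩, fun h => h.2⟩
  have hequiv := Submodule.comapSubtypeEquivOfLe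
    (inf_le_left : Cd ⊓ LinearMap.ker (Tmap d α h2) ≤ Cd)
  have h3 : finrank ℂ (LinearMap.ker T') =
      finrank ℂ (Cd ⊓ LinearMap.ker (Tmap d α h2) : Submodule ℂ (Matrix (Fin n) (Fin n) ℂ)) := by
    rw [hkerT']
    exact hequiv.finrank_eq
  rw [← hrn, ← h3, add_comm]
end aux


section conj
variable {n : ℕ} (P : Matrix (Fin n) (Fin n) ℂ) [Invertible P]

noncomputable def conjE : Matrix (Fin n) (Fin n) ℂ ≃ₗ[ℂ] Matrix (Fin n) (Fin n) ℂ where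
  toFun M := P * M * P⁻¹
  invFun M := P⁻¹ * M * P
  map_add' M N := by
    show P * (M + N) * P⁻¹ = P * M * P⁻¹ + P * N * P⁻¹
    rw [mul_add, add_mul]
  map_smul' c M := by
    show P * (c • M) * P⁻¹ = c • (P * M * P⁻¹)
    rw [mul_smul_comm, smul_mul_assoc]
  left_inv M := by
    simp [Matrix.mul_assoc, Matrix.inv_mul_cancel_left_of_invertible,
      Matrix.mul_inv_cancel_left_of_invertible, Matrix.inv_mul_of_invertible,
      Matrix.mul_inv_of_invertible]
  right_inv M := by
    simp [Matrix.mul_assoc, Matrix.inv_mul_cancel_left_of_invertible,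
      Matrix.mul_inv_cancel_left_of_invertible, Matrix.inv_mul_of_invertible,
      Matrix.mul_inv_of_invertible]

lemma conjE_mul (M N : Matrix (Fin n) (Fin n) ℂ) :
    conjE P (M * N) = conjE P M * conjE P N := by
  show P * (M * N) * P⁻¹ = (P * M * P⁻¹) * (P * N * P⁻¹)
  simp [Matrix.mul_assoc, Matrix.inv_mul_cancel_left_of_invertible]

lemma conjE_symm_mul (M N : Matrix (Fin n) (Fin n) ℂ) :
    (conjE P).symm (M * N) = (conjE P).symm M * (conjE P).symm N := by
  apply (conjE P).injective
  rw [conjE_mul, (conjE P).apply_symm_apply, (conjE P).apply_symm_apply,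
    (conjE P).apply_symm_apply]

lemma comm_conj_iff (M N : Matrix (Fin n) (Fin n) ℂ) :
    conjE P M * conjE P N = conjE P N * conjE P M ↔ M * N = N * M := by
  rw [← conjE_mul, ← conjE_mul, (conjE P).injective.eq_iff]

noncomputable def mulVecE : (Fin n → ℂ) ≃ₗ[ℂ] (Fin n → ℂ) where
  toFun := P.mulVecLin
  invFun := (P⁻¹).mulVecLin
  map_add' u v := map_add _ _ _
  map_smul' c v := map_smul _ _ _
  left_inv v := by
    simp only [Matrix.mulVecLin_apply, Matrix.mulVec_mulVec,
      Matrix.inv_mul_of_invertible, Matrix.one_mulVec]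
  right_inv v := by
    simp only [Matrix.mulVecLin_apply, Matrix.mulVec_mulVec,
      Matrix.mul_inv_of_invertible, Matrix.one_mulVec]

lemma ker_conj (M : Matrix (Fin n) (Fin n) ℂ) :
    LinearMap.ker ((P * M * P⁻¹).mulVecLin) =
      Submodule.map (mulVecE P : (Fin n → ℂ) →ₗ[ℂ] (Fin n → ℂ))
        (LinearMap.ker M.mulVecLin) := by
  ext v
  simp only [LinearMap.mem_ker, Matrix.mulVecLin_apply, Submodule.mem_map]
  constructor
  · intro h
    refine ⟨(P⁻¹).mulVec v, ?_, ?_⟩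
    · show M.mulVec ((P⁻¹).mulVec v) = 0
      have h1 : (P * M * P⁻¹).mulVec v = P.mulVec (M.mulVec ((P⁻¹).mulVec v)) := by
        rw [Matrix.mulVec_mulVec, Matrix.mulVec_mulVec]
      rw [h1] at h
      have := congrArg (fun u => (P⁻¹).mulVec u) h
      simpa [Matrix.mulVec_mulVec, Matrix.inv_mul_of_invertible, Matrix.one_mulVec] using this
    · show P.mulVecLin ((P⁻¹).mulVec v) = v
      simp [Matrix.mulVecLin_apply, Matrix.mulVec_mulVec, Matrix.mul_inv_of_invertible,
        Matrix.one_mulVec]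
  · rintro ⟨u, hu, rfl⟩
    show (P * M * P⁻¹).mulVec (P.mulVecLin u) = 0
    simp only [Matrix.mulVecLin_apply, Matrix.mulVec_mulVec, Matrix.mul_assoc,
      Matrix.inv_mul_cancel_left_of_invertible, Matrix.inv_mul_of_invertible, Matrix.mul_one]
    rw [← Matrix.mulVec_mulVec, hu, Matrix.mulVec_zero]

lemma finrank_ker_conj (M : Matrix (Fin n) (Fin n) ℂ) :
    finrank ℂ (LinearMap.ker ((P * M * P⁻¹).mulVecLin)) =
      finrank ℂ (LinearMap.ker M.mulVecLin) := by
  rw [ker_conj P M]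
  exact LinearEquiv.finrank_map_eq (mulVecE P) _

lemma cent_conj (D : Matrix (Fin n) (Fin n) ℂ) :
    matCentralizer n (P * D * P⁻¹) =
      Submodule.map (conjE P : _ →ₗ[ℂ] _) (matCentralizer n D) := by
  ext y
  rw [Submodule.mem_map_equiv, mem_matCentralizer, mem_matCentralizer]
  have hx : P * D * P⁻¹ = conjE P D := rfl
  have hy : y = conjE P ((conjE P).symm y) := ((conjE P).apply_symm_apply y).symm
  constructor
  · intro h
    apply (conjE P).injective
    rw [conjE_mul, conjE_mul, ← hx, ← hy]
    exact h
  · intro h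
    rw [hx]
    conv_lhs => rw [hy]
    conv_rhs => rw [hy]
    rw [← conjE_mul, ← conjE_mul, h]

lemma commSet_conj (D : Matrix (Fin n) (Fin n) ℂ) :
    commSet n (P * D * P⁻¹) = (conjE P) '' (commSet n D) := by
  have hx : P * D * P⁻¹ = conjE P D := rfl
  ext t
  constructor
  · rintro ⟨y, z, hy, hz, rfl⟩
    refine ⟨(conjE P).symm y * (conjE P).symm z - (conjE P).symm z * (conjE P).symm y,
      ⟨(conjE P).symm y, (conjE P).symm z, ?_, ?_, rfl⟩, ?_⟩
    · apply (conjE P).injective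
      rw [conjE_mul, conjE_mul, (conjE P).apply_symm_apply]
      rw [hx] at hy
      exact hy
    · apply (conjE P).injective
      rw [conjE_mul, conjE_mul, (conjE P).apply_symm_apply]
      rw [hx] at hz
      exact hz
    · rw [map_sub, conjE_mul, conjE_mul, (conjE P).apply_symm_apply,
        (conjE P).apply_symm_apply]
  · rintro ⟨s, ⟨y, z, hy, hz, rfl⟩, rfl⟩
    refine ⟨conjE P y, conjE P z, ?_, ?_, ?_⟩
    · rw [hx, ← conjE_mul, ← conjE_mul, hy]
    · rw [hx, ← conjE_mul, ← conjE_mul, hz]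
    · rw [map_sub, conjE_mul, conjE_mul]
end conj

/-- For a diagonalizable `x` with exactly `r` distinct eigenvalues `α₁, …, α_r` and
eigenspace dimensions `mₖ`, the centralizer has dimension `Σ mₖ²` and the commutator set
`C(x)` is a subspace of dimension `(Σ mₖ²) - r`. -/
theorem stmt_13 (n : ℕ) (hn : 1 ≤ n) (x : Matrix (Fin n) (Fin n) ℂ)
    (hdiag : ∃ P D : Matrix (Fin n) (Fin n) ℂ, IsUnit P ∧ D.IsDiag ∧ x = P * D * P⁻¹)
    (r : ℕ) (α : Fin r → ℂ) (hα : Function.Injective α)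
    (heig : ∀ k, LinearMap.ker (Matrix.mulVecLin (x - α k • 1)) ≠ ⊥)
    (hall : ∀ β : ℂ, LinearMap.ker (Matrix.mulVecLin (x - β • 1)) ≠ ⊥ → ∃ k, β = α k) :
    Module.finrank ℂ (matCentralizer n x) =
      ∑ k, (Module.finrank ℂ (LinearMap.ker (Matrix.mulVecLin (x - α k • 1)))) ^ 2 ∧
    commSet n x = (Submodule.span ℂ (commSet n x) : Set (Matrix (Fin n) (Fin n) ℂ)) ∧
    Module.finrank ℂ (Submodule.span ℂ (commSet n x)) + r =
      ∑ k, (Module.finrank ℂ (LinearMap.ker (Matrix.mulVecLin (x - α k • 1)))) ^ 2 := by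
  classical
  obtain ⟨P, D, hP, hDdiag, hx⟩ := hdiag
  haveI : Invertible P := P.invertibleOfIsUnitDet ((Matrix.isUnit_iff_isUnit_det P).mp hP)
  set d : Fin n → ℂ := fun i => D i i with hd
  have hD : D = Matrix.diagonal d := by
    ext i j
    by_cases h : i = j
    · subst h; simp [Matrix.diagonal_apply_eq, hd]
    · rw [hDdiag h, Matrix.diagonal_apply_ne _ h]
  rw [hD] at hx
  subst hx
  have hconj_sub : ∀ β : ℂ, P * Matrix.diagonal d * P⁻¹ - β • 1 =
      P * (Matrix.diagonal d - β • (1 : Matrix (Fin n) (Fin n) ℂ)) * P⁻¹ := by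
    intro β
    rw [Matrix.mul_sub, Matrix.sub_mul]
    congr 1
    rw [mul_smul_comm, mul_one, smul_mul_assoc, Matrix.mul_inv_of_invertible]
  have hkerfr : ∀ β : ℂ, Module.finrank ℂ
      (LinearMap.ker ((P * Matrix.diagonal d * P⁻¹ - β • 1).mulVecLin)) =
      Fintype.card {i // d i = β} := by
    intro β
    rw [hconj_sub β, finrank_ker_conj]
    exact finrank_eig_diag d β
  have hkerbot : ∀ β : ℂ,
      (LinearMap.ker ((P * Matrix.diagonal d * P⁻¹ - β • 1).mulVecLin) ≠ ⊥) ↔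
        ∃ i, d i = β := by
    intro β
    rw [ne_eq, ← Submodule.finrank_eq_zero (R := ℂ), hkerfr β]
    simp only [Fintype.card_eq_zero_iff, isEmpty_subtype]
    exact not_forall_not
  have h1 : ∀ k, ∃ i, d i = α k := fun k => (hkerbot (α k)).mp (heig k)
  have h2 : ∀ i, ∃ k, d i = α k := fun i =>
    match hall (d i) ((hkerbot (d i)).mpr ⟨i, rfl⟩) with
    | ⟨k, hk⟩ => ⟨k, hk⟩
  have hfr_eig : ∀ k, Module.finrank ℂ
      (LinearMap.ker ((P * Matrix.diagonal d * P⁻¹ - α k • 1).mulVecLin)) =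
      Fintype.card {i // fI d α h2 i = k} := fun k =>
    (hkerfr (α k)).trans (Fintype.card_congr
      (Equiv.subtypeEquivRight (fun i => dk_iff d α h2 hα i k)))
  have hc0 : Module.finrank ℂ (matCentralizer n (Matrix.diagonal d)) =
      ∑ k, Fintype.card {i // fI d α h2 i = k} ^ 2 := by
    rw [finrank_cent_diag]
    have hcard : Fintype.card {p : Fin n × Fin n // d p.1 = d p.2} =
        Fintype.card {p : Fin n × Fin n // fI d α h2 p.1 = fI d α h2 p.2} :=
      Fintype.card_congr (Equiv.subtypeEquivRight fun p => deq_iff d α h2 hα p.1 p.2)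
    rw [hcard, card_pairs (fI d α h2)]
  have hc1 : Module.finrank ℂ (matCentralizer n (P * Matrix.diagonal d * P⁻¹)) =
      ∑ k, Fintype.card {i // fI d α h2 i = k} ^ 2 := by
    rw [cent_conj P (Matrix.diagonal d), LinearEquiv.finrank_map_eq]
    exact hc0
  have hcs : commSet n (P * Matrix.diagonal d * P⁻¹) =
      (conjE P) '' (commSet n (Matrix.diagonal d)) := commSet_conj P _
  have hcsd : commSet n (Matrix.diagonal d) =
      ↑(matCentralizer n (Matrix.diagonal d) ⊓ LinearMap.ker (Tmap d α h2)) :=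
    commSet_diag d α h2 hα
  have hspan : Submodule.span ℂ (commSet n (P * Matrix.diagonal d * P⁻¹)) =
      Submodule.map (conjE P : _ →ₗ[ℂ] _)
        (matCentralizer n (Matrix.diagonal d) ⊓ LinearMap.ker (Tmap d α h2)) := by
    have hmapeq : ∀ q : Submodule ℂ (Matrix (Fin n) (Fin n) ℂ),
        Submodule.map (conjE P).toLinearMap q =
          Submodule.map ((conjE P : Matrix (Fin n) (Fin n) ℂ →ₗ[ℂ] Matrix (Fin n) (Fin n) ℂ)) q :=
      fun q => SetLike.coe_injective
        (by rw [Submodule.map_coe, LinearEquiv.coe_coe])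
    rw [hcs, hcsd, ← LinearEquiv.coe_coe, Submodule.span_image, Submodule.span_eq]
  refine ⟨?_, ?_, ?_⟩
  · rw [hc1]
    exact (Finset.sum_congr rfl fun k _ => by rw [hfr_eig k]).symm
  · rw [hspan, hcs, hcsd, Submodule.map_coe, LinearEquiv.coe_coe]
  · rw [hspan, LinearEquiv.finrank_map_eq,
      finrank_B0 d α h2 hα h1, hc0]
    exact (Finset.sum_congr rfl fun k _ => by rw [hfr_eig k]).symm
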